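/- For m ≥ 3 and real r > 0, let f(m,r) = Σ_{j=1}^m (−1)^{m−j} C(m,j) j^r. Then f(m,r) = 0 for r = 1, 2, …, m−1; f(m,r) < 0 for m−2i < r < m−2i+1 with 1 ≤ i ≤ ⌊m/2⌋; and f(m,r) > 0 for m−2i−1 < r < m−2i with 1 ≤ i ≤ ⌊(m−1)/2⌋. -/

import Mathlib

open Finset Set

/-- Alternating finite difference sum: `∑_{j=0}^k (-1)^j C(k,j) (x+j)^r`. -/
noncomputable def Efd (k : ℕ) (x r : ℝ) : ℝ :=
  ∑ j ∈ Finset.range (k+1), (-1:ℝ)^j * (k.choose j : ℝ) * (x + j) ^ r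

lemma Efd_succ (k : ℕ) (x r : ℝ) : Efd (k+1) x r = Efd k x r - Efd k (x+1) r := by
  have hB : ∑ j ∈ Finset.range (k+1), (-1:ℝ)^j * (k.choose (j+1) : ℝ) * (x + (j+1:ℕ)) ^ r
      = x ^ r - Efd k x r := by
    rw [Finset.sum_range_succ]
    have hE : Efd k x r
        = (∑ j ∈ Finset.range k, -((-1:ℝ)^j * (k.choose (j+1) : ℝ) * (x + (j+1:ℕ)) ^ r))
          + x ^ r := by
      unfold Efd
      rw [Finset.sum_range_succ']
      congr 1
      · apply Finset.sum_congr rfl; intro j _; push_cast; ring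
      · simp
    rw [Finset.sum_neg_distrib] at hE
    simp only [Nat.choose_succ_self, Nat.cast_zero]
    have : Efd k x r = -(∑ j ∈ Finset.range k, (-1:ℝ)^j * (k.choose (j+1) : ℝ) * (x + (j+1:ℕ)) ^ r) + x ^ r := hE
    linarith [this]
  unfold Efd
  rw [Finset.sum_range_succ' (fun j => (-1:ℝ)^j * (((k+1).choose j : ℕ) : ℝ) * (x + j) ^ r)]
  have h1 : ∀ j ∈ Finset.range (k+1),
      (-1:ℝ)^(j+1) * (((k+1).choose (j+1) : ℕ) : ℝ) * (x + ((j+1:ℕ):ℝ)) ^ r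
      = -((-1:ℝ)^j * (k.choose j : ℝ) * ((x+1) + j) ^ r)
        - ((-1:ℝ)^j * (k.choose (j+1) : ℝ) * (x + ((j+1:ℕ):ℝ)) ^ r) := by
    intro j _
    rw [Nat.choose_succ_succ]
    have hb : (x + 1) + (j:ℝ) = x + ((j:ℕ)+1:ℕ) := by push_cast; ring
    rw [hb]
    push_cast
    ring
  rw [Finset.sum_congr rfl h1]
  rw [Finset.sum_sub_distrib, Finset.sum_neg_distrib]
  rw [hB]
  simp [Efd]
  ring

example : True := trivial

lemma Efd_hasDerivAt (k : ℕ) (r : ℝ) {t : ℝ} (ht : 0 < t) :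
    HasDerivAt (fun x => Efd k x r) (r * Efd k t (r-1)) t := by
  have : HasDerivAt (fun x => Efd k x r)
      (∑ j ∈ Finset.range (k+1), r * ((-1:ℝ)^j * (k.choose j : ℝ) * (t + j) ^ (r-1))) t := by
    unfold Efd
    apply HasDerivAt.fun_sum
    intro j _
    have hpos : (0:ℝ) < t + j := by positivity
    have h1 : HasDerivAt (fun x : ℝ => x + (j:ℝ)) 1 t := (hasDerivAt_id t).add_const _
    have h2 := h1.rpow_const (p := r) (Or.inl (ne_of_gt hpos))
    have h3 := h2.const_mul ((-1:ℝ)^j * (k.choose j : ℝ))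
    convert h3 using 1
    · rfl
    ring
  convert this using 1
  rw [Efd, Finset.mul_sum]

lemma Efd_mvt (k : ℕ) {x : ℝ} (r : ℝ) (hx : 0 ≤ x) (h : 0 < x ∨ 0 < r) :
    ∃ c, x < c ∧ c < x + 1 ∧ Efd (k+1) x r = -(r * Efd k c (r-1)) := by
  have hcont : ContinuousOn (fun t => Efd k t r) (Set.Icc x (x+1)) := by
    unfold Efd
    apply continuousOn_finset_sum
    intro j _
    apply ContinuousOn.mul continuousOn_const
    apply ContinuousOn.rpow_const (continuous_id.add continuous_const).continuousOn
    intro t htt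
    rcases h with h | h
    · left
      refine ne_of_gt ?_
      show 0 < t + (j:ℝ)
      have h1 : x ≤ t := htt.1
      have hj : (0:ℝ) ≤ (j:ℝ) := Nat.cast_nonneg j
      linarith
    · right; linarith
  have hderiv : ∀ t ∈ Set.Ioo x (x+1), HasDerivAt (fun x => Efd k x r) (r * Efd k t (r-1)) t := by
    intro t htt
    exact Efd_hasDerivAt k r (lt_of_le_of_lt hx htt.1)
  obtain ⟨c, hc, hceq⟩ := exists_hasDerivAt_eq_slope (fun t => Efd k t r)
    (fun t => r * Efd k t (r-1)) (by linarith : x < x + 1) hcont hderiv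
  refine ⟨c, hc.1, hc.2, ?_⟩
  rw [Efd_succ]
  have : x + 1 - x = 1 := by ring
  rw [this, div_one] at hceq
  linarith [hceq]

lemma Efd_key (k : ℕ) : ∀ x : ℝ, 0 < x → ∀ r : ℝ, ∃ ξ : ℝ, 0 < ξ ∧
    (-1:ℝ)^k * Efd k x r = (∏ i ∈ Finset.range k, (r - i)) * ξ ^ (r - k) := by
  induction k with
  | zero =>
    intro x hx r
    refine ⟨x, hx, ?_⟩
    simp [Efd]
  | succ k ih =>
    intro x hx r
    obtain ⟨c, hc1, _, hceq⟩ := Efd_mvt k r hx.le (Or.inl hx)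
    obtain ⟨ξ, hξ, hkey⟩ := ih c (hx.trans hc1) (r-1)
    refine ⟨ξ, hξ, ?_⟩
    rw [hceq]
    have hprod : ∏ i ∈ Finset.range (k+1), (r - i)
        = (∏ i ∈ Finset.range k, ((r-1) - i)) * r := by
      rw [Finset.prod_range_succ']
      congr 1
      · apply Finset.prod_congr rfl; intro i _; push_cast; ring
      · simp
    have hexp : r - ((k:ℕ)+1:ℕ) = (r - 1) - (k:ℕ) := by push_cast; ring
    rw [hprod]
    push_cast
    have : (-1:ℝ)^(k+1) * -(r * Efd k c (r-1)) = r * ((-1:ℝ)^k * Efd k c (r-1)) := by ring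
    rw [this, hkey]
    rw [show r - ((k:ℝ)+1) = (r-1) - (k:ℝ) by ring]
    ring

/-- Main representation: for `r > 0`, the alternating sum equals `(∏ (r-i)) ξ^{r-m}`, `ξ>0`. -/
lemma Efd_main (n : ℕ) {r : ℝ} (hr : 0 < r) : ∃ ξ : ℝ, 0 < ξ ∧
    (-1:ℝ)^(n+1) * Efd (n+1) 0 r = (∏ i ∈ Finset.range (n+1), (r - i)) * ξ ^ (r - (n+1:ℕ)) := by
  obtain ⟨c, hc1, _, hceq⟩ := Efd_mvt n r le_rfl (Or.inr hr)
  obtain ⟨ξ, hξ, hkey⟩ := Efd_key n c hc1 (r-1)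
  refine ⟨ξ, hξ, ?_⟩
  rw [hceq]
  have hprod : ∏ i ∈ Finset.range (n+1), (r - i)
      = (∏ i ∈ Finset.range n, ((r-1) - i)) * r := by
    rw [Finset.prod_range_succ']
    congr 1
    · apply Finset.prod_congr rfl; intro i _; push_cast; ring
    · simp
  rw [hprod]
  push_cast
  have : (-1:ℝ)^(n+1) * -(r * Efd n c (r-1)) = r * ((-1:ℝ)^n * Efd n c (r-1)) := by ring
  rw [this, hkey]
  rw [show r - ((n:ℝ)+1) = (r-1) - (n:ℝ) by ring]
  ring

/-- Conversion of the statement's sum to `(-1)^m * Efd m 0 r`. -/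
lemma sum_eq_Efd (m : ℕ) (hm : 1 ≤ m) {r : ℝ} (hr : 0 < r) :
    ∑ j ∈ Finset.Icc 1 m, (-1 : ℝ) ^ (m - j) * (m.choose j : ℝ) * (j : ℝ) ^ r
      = (-1:ℝ)^m * Efd m 0 r := by
  have hset : Finset.range (m+1) = insert 0 (Finset.Icc 1 m) := by
    ext a; simp [Finset.mem_range, Finset.mem_Icc]; omega
  rw [Efd, hset, Finset.sum_insert (by simp)]
  have h0 : (-1:ℝ)^0 * (m.choose 0 : ℝ) * ((0:ℝ) + (0:ℕ)) ^ r = 0 := by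
    simp [Real.zero_rpow (ne_of_gt hr)]
  rw [h0, zero_add, Finset.mul_sum]
  apply Finset.sum_congr rfl
  intro j hj
  simp only [Finset.mem_Icc] at hj
  have hsign : (-1:ℝ)^(m-j) = (-1:ℝ)^m * (-1:ℝ)^j := by
    have : (-1:ℝ)^(m-j) * (-1:ℝ)^j = (-1:ℝ)^m := by
      rw [← pow_add]; congr 1; omega
    have hj2 : (-1:ℝ)^j * (-1:ℝ)^j = 1 := by
      rw [← pow_add]; exact Even.neg_one_pow ⟨j, rfl⟩
    calc (-1:ℝ)^(m-j) = (-1:ℝ)^(m-j) * ((-1:ℝ)^j * (-1:ℝ)^j) := by rw [hj2, mul_one]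
      _ = ((-1:ℝ)^(m-j) * (-1:ℝ)^j) * (-1:ℝ)^j := by ring
      _ = (-1:ℝ)^m * (-1:ℝ)^j := by rw [this]
  rw [hsign]
  have : (0:ℝ) + (j:ℕ) = (j:ℝ) := by norm_num
  rw [this]
  ring

/-- Sign of the product `∏_{i<m} (r-i)` when `a < r < a+1`. -/
lemma prod_sign (m a : ℕ) (ha : a < m) {r : ℝ} (h1 : (a:ℝ) < r) (h2 : r < (a:ℝ)+1) :
    0 < (-1:ℝ)^(m - (a+1)) * ∏ i ∈ Finset.range m, (r - i) := by
  have hsplit : (∏ i ∈ Finset.Ico 0 (a+1), (r - i)) * ∏ i ∈ Finset.Ico (a+1) m, (r - i)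
      = ∏ i ∈ Finset.Ico 0 m, (r - i) :=
    Finset.prod_Ico_consecutive _ (Nat.zero_le _) ha
  have hneg : ∏ i ∈ Finset.Ico (a+1) m, (r - i)
      = (-1:ℝ)^(m - (a+1)) * ∏ i ∈ Finset.Ico (a+1) m, ((i:ℝ) - r) := by
    have : ∀ i ∈ Finset.Ico (a+1) m, (r - (i:ℝ)) = (-1) * ((i:ℝ) - r) := by
      intro i _; ring
    rw [Finset.prod_congr rfl this, Finset.prod_mul_distrib, Finset.prod_const,
      Nat.card_Ico]
  have hp1 : 0 < ∏ i ∈ Finset.Ico 0 (a+1), (r - i) := by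
    apply Finset.prod_pos
    intro i hi
    simp only [Finset.mem_Ico] at hi
    have : (i:ℝ) ≤ (a:ℝ) := by exact_mod_cast Nat.lt_succ_iff.mp hi.2
    linarith
  have hp2 : 0 < ∏ i ∈ Finset.Ico (a+1) m, ((i:ℝ) - r) := by
    apply Finset.prod_pos
    intro i hi
    simp only [Finset.mem_Ico] at hi
    have : (a:ℝ)+1 ≤ (i:ℝ) := by exact_mod_cast hi.1
    linarith
  have hrange : ∏ i ∈ Finset.range m, (r - i) = ∏ i ∈ Finset.Ico 0 m, (r - i) := by
    rw [Finset.range_eq_Ico]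
  rw [hrange, ← hsplit, hneg]
  have hsq : (-1:ℝ)^(m-(a+1)) * ((∏ i ∈ Finset.Ico 0 (a+1), (r - i)) *
      ((-1:ℝ)^(m-(a+1)) * ∏ i ∈ Finset.Ico (a+1) m, ((i:ℝ) - r)))
      = ((-1:ℝ)^(m-(a+1)))^2 * ((∏ i ∈ Finset.Ico 0 (a+1), (r - i)) *
        ∏ i ∈ Finset.Ico (a+1) m, ((i:ℝ) - r)) := by ring
  rw [hsq]
  have : ((-1:ℝ)^(m-(a+1)))^2 = 1 := by
    rcases Nat.even_or_odd (m-(a+1)) with h | h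
    · rw [h.neg_one_pow]; norm_num
    · rw [h.neg_one_pow]; norm_num
  rw [this, one_mul]
  positivity

theorem stmt_11 (m : ℕ) (hm : 3 ≤ m) :
    (∀ r : ℕ, 1 ≤ r → r ≤ m - 1 →
      ∑ j ∈ Finset.Icc 1 m, (-1 : ℝ) ^ (m - j) * (m.choose j : ℝ) * (j : ℝ) ^ (r : ℝ) = 0) ∧
    (∀ i : ℕ, 1 ≤ i → i ≤ m / 2 → ∀ r : ℝ, (m : ℝ) - 2 * i < r → r < (m : ℝ) - 2 * i + 1 →
      ∑ j ∈ Finset.Icc 1 m, (-1 : ℝ) ^ (m - j) * (m.choose j : ℝ) * (j : ℝ) ^ r < 0) ∧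
    (∀ i : ℕ, 1 ≤ i → i ≤ (m - 1) / 2 → ∀ r : ℝ, (m : ℝ) - 2 * i - 1 < r → r < (m : ℝ) - 2 * i →
      0 < ∑ j ∈ Finset.Icc 1 m, (-1 : ℝ) ^ (m - j) * (m.choose j : ℝ) * (j : ℝ) ^ r) := by
  obtain ⟨n, rfl⟩ : ∃ n, m = n + 1 := ⟨m - 1, by omega⟩
  refine ⟨?_, ?_, ?_⟩
  · intro r hr1 hr2
    have hrpos : (0:ℝ) < (r:ℝ) := by exact_mod_cast hr1
    rw [sum_eq_Efd (n+1) (by omega) hrpos]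
    obtain ⟨ξ, hξ, heq⟩ := Efd_main n hrpos
    rw [heq]
    have hmem : r ∈ Finset.range (n+1) := Finset.mem_range.mpr (by omega)
    rw [Finset.prod_eq_zero hmem (by simp), zero_mul]
  · intro i hi1 hi2 r hr1 hr2
    have h2i : 2 * i ≤ n + 1 := by omega
    set a := n + 1 - 2 * i with ha_def
    have hacast : ((a:ℕ):ℝ) = ((n+1:ℕ):ℝ) - 2 * i := by
      rw [ha_def, Nat.cast_sub h2i]; push_cast; ring
    have hra : (a:ℝ) < r := by rw [hacast]; push_cast at hr1 ⊢; linarith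
    have hra2 : r < (a:ℝ) + 1 := by rw [hacast]; push_cast at hr2 ⊢; linarith
    have hrpos : (0:ℝ) < r := lt_of_le_of_lt (Nat.cast_nonneg a) hra
    have ham : a < n + 1 := by omega
    rw [sum_eq_Efd (n+1) (by omega) hrpos]
    obtain ⟨ξ, hξ, heq⟩ := Efd_main n hrpos
    rw [heq]
    have hsign := prod_sign (n+1) a ham hra hra2
    have hodd : Odd (n + 1 - (a + 1)) := by
      have : n + 1 - (a + 1) = 2 * i - 1 := by omega
      rw [this]; exact ⟨i - 1, by omega⟩
    rw [hodd.neg_one_pow] at hsign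
    have hprodneg : ∏ x ∈ Finset.range (n+1), (r - x) < 0 := by linarith
    exact mul_neg_of_neg_of_pos hprodneg (Real.rpow_pos_of_pos hξ _)
  · intro i hi1 hi2 r hr1 hr2
    have h2i : 2 * i + 1 ≤ n + 1 := by omega
    set a := n + 1 - (2 * i + 1) with ha_def
    have hacast : ((a:ℕ):ℝ) = ((n+1:ℕ):ℝ) - 2 * i - 1 := by
      rw [ha_def, Nat.cast_sub h2i]; push_cast; ring
    have hra : (a:ℝ) < r := by rw [hacast]; push_cast at hr1 ⊢; linarith
    have hra2 : r < (a:ℝ) + 1 := by rw [hacast]; push_cast at hr2 ⊢; linarith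
    have hrpos : (0:ℝ) < r := lt_of_le_of_lt (Nat.cast_nonneg a) hra
    have ham : a < n + 1 := by omega
    rw [sum_eq_Efd (n+1) (by omega) hrpos]
    obtain ⟨ξ, hξ, heq⟩ := Efd_main n hrpos
    rw [heq]
    have hsign := prod_sign (n+1) a ham hra hra2
    have heven : Even (n + 1 - (a + 1)) := by
      have : n + 1 - (a + 1) = 2 * i := by omega
      rw [this]; exact ⟨i, by omega⟩
    rw [heven.neg_one_pow, one_mul] at hsign
    exact mul_pos hsign (Real.rpow_pos_of_pos hξ _)
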